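/- (Asymptotic estimate via Taylor/FTC expansion) Let σ be a sigmoidal function whose density φ_σ(x) = (σ(x+1)-σ(x-1))/2 has compact support in [-Υ, Υ], Υ > 0, and satisfies the standing assumptions. Let f ∈ AC([a,b]) with derivative f′, extended periodically. Then for every x ∈ [a,b] and n ∈ ℕ (with ⌈na⌉ ≤ ⌊nb⌋-1), |K_n f(x) - f(x)| ≤ ∫_{|z| ≤ (1+Υ)/n} |f′(z+x)| dz. -/

import Mathlib

open Filter MeasureTheory

/-- The density function generated by a sigmoidal function. -/
noncomputable def phiSigma (σ : ℝ → ℝ) (x : ℝ) : ℝ := (σ (x + 1) - σ (x - 1)) / 2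

/-- The Kantorovich neural network operator `K_n f`. -/
noncomputable def Kop (σ : ℝ → ℝ) (a b : ℝ) (n : ℕ) (f : ℝ → ℝ) (x : ℝ) : ℝ :=
  (∑ k ∈ Finset.Icc ⌈(n : ℝ) * a⌉ (⌊(n : ℝ) * b⌋ - 1),
      ((n : ℝ) * ∫ u in ((k : ℝ) / n)..(((k : ℝ) + 1) / n), f u) *
        phiSigma σ ((n : ℝ) * x - (k : ℝ))) /
  (∑ k ∈ Finset.Icc ⌈(n : ℝ) * a⌉ (⌊(n : ℝ) * b⌋ - 1),
      phiSigma σ ((n : ℝ) * x - (k : ℝ)))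

section Aux

variable {σ : ℝ → ℝ}

lemma sigma_strict_aux (hmono : Monotone σ) (h1 : Tendsto σ atTop (nhds 1))
    (hconc : ConcaveOn ℝ (Set.Ici 0) σ) {s t : ℝ} (hs : 0 ≤ s) (hst : s < t)
    (ht : σ t < 1) : σ s < σ t := by
  by_contra hcon
  have hse : σ s = σ t := le_antisymm (hmono hst.le) (not_lt.mp hcon)
  have key2 : ∀ u, t ≤ u → σ u ≤ σ t := by
    intro u hu
    rcases eq_or_lt_of_le hu with h | h
    · rw [← h]
    · have hsu : s < u := hst.trans h
      have hus : (0:ℝ) < u - s := by linarith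
      have hw1 : (0:ℝ) ≤ (u - t)/(u - s) := div_nonneg (by linarith) hus.le
      have hw2 : (0:ℝ) ≤ (t - s)/(u - s) := div_nonneg (by linarith) hus.le
      have hsum : (u - t)/(u - s) + (t - s)/(u - s) = 1 := by
        rw [← add_div, show u - t + (t - s) = u - s by ring]
        exact div_self (by linarith)
      have hcc := hconc.2 (by exact hs : s ∈ Set.Ici (0:ℝ))
        (by simp only [Set.mem_Ici]; linarith : u ∈ Set.Ici (0:ℝ)) hw1 hw2 hsum
      simp only [smul_eq_mul] at hcc
      rw [show (u - t)/(u - s) * s + (t - s)/(u - s) * u = t from by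
        field_simp; ring] at hcc
      rw [hse] at hcc
      have hw2pos : 0 < (t - s)/(u - s) := div_pos (by linarith) hus
      nlinarith [hcc, hsum]
  have : (1:ℝ) ≤ σ t := le_of_tendsto h1 (eventually_atTop.2 ⟨t, key2⟩)
  linarith

end Aux

/-- if `φ_σ` is supported in `[-Υ, Υ]` and `f` is absolutely continuous
(with derivative `f'`, extended periodically), then
`|K_n f(x) - f(x)| ≤ ∫_{|z| ≤ (1+Υ)/n} |f'(z + x)| dz`. -/
theorem stmt_18 (σ : ℝ → ℝ) (hmeas : Measurable σ) (hmono : Monotone σ)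
    (h0 : Tendsto σ atBot (nhds 0)) (h1 : Tendsto σ atTop (nhds 1))
    (hodd : ∀ x : ℝ, σ (-x) - 1 / 2 = -(σ x - 1 / 2))
    (hC2 : ContDiff ℝ 2 σ) (hconc : ConcaveOn ℝ (Set.Ici 0) σ)
    (hσ1 : σ 1 < 1)
    (Υ : ℝ) (hΥ : 0 < Υ)
    (hsupp : ∀ x : ℝ, Υ < |x| → phiSigma σ x = 0)
    (a b : ℝ) (hab : a < b)
    (f f' : ℝ → ℝ) (hper : Function.Periodic f (b - a))
    (hf'loc : LocallyIntegrable f')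
    (hFTC : ∀ u v : ℝ, f v - f u = ∫ t in u..v, f' t)
    (n : ℕ) (hn1 : 1 ≤ n)
    (hn : ⌈(n : ℝ) * a⌉ ≤ ⌊(n : ℝ) * b⌋ - 1)
    (x : ℝ) (hx : x ∈ Set.Icc a b) :
    |Kop σ a b n f x - f x| ≤
      ∫ z in (-(1 + Υ) / n)..((1 + Υ) / n), |f' (z + x)| := by
  have hn0 : (0:ℝ) < n := by exact_mod_cast hn1
  rw [neg_div]
  set δ : ℝ := (1 + Υ) / n with hδdef
  have hδ0 : 0 < δ := by positivity
  -- interval integrability of f'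
  have hf'int : ∀ u v : ℝ, IntervalIntegrable f' volume u v := fun u v =>
    (hf'loc.integrableOn_isCompact isCompact_uIcc).intervalIntegrable
  -- f is continuous (primitive of locally integrable function)
  have hfc : Continuous f := by
    have hfv : ∀ v, f v = f 0 + ∫ t in (0:ℝ)..v, f' t := fun v => by
      have := hFTC 0 v; linarith
    rw [show f = fun v => f 0 + ∫ t in (0:ℝ)..v, f' t from funext hfv]
    exact continuous_const.add (intervalIntegral.continuous_primitive (fun a b => hf'int a b) 0)
  set I : ℝ := ∫ z in (-δ)..δ, |f' (z + x)| with hIdef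
  have hInn : 0 ≤ I := intervalIntegral.integral_nonneg (by linarith) (fun u _ => abs_nonneg _)
  have hIeq : I = ∫ t in Set.Ioc (x - δ) (x + δ), |f' t| := by
    rw [hIdef, intervalIntegral.integral_comp_add_right (fun t => |f' t|) x,
      intervalIntegral.integral_of_le (by linarith : -δ + x ≤ δ + x),
      show -δ + x = x - δ by ring, show δ + x = x + δ by ring]
  -- pointwise estimate
  have key : ∀ u : ℝ, |u - x| ≤ δ → |f u - f x| ≤ I := by
    intro u hu
    rw [abs_le] at hu
    rw [hFTC x u]
    have habs : |∫ t in x..u, f' t| ≤ ∫ t in Set.uIoc x u, |f' t| := by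
      simpa [Real.norm_eq_abs] using
        intervalIntegral.norm_integral_le_integral_norm_uIoc (f := f') (a := x) (b := u)
          (μ := volume)
    refine habs.trans ?_
    rw [hIeq]
    apply setIntegral_mono_set
    · have hIO : IntegrableOn f' (Set.Icc (x - δ) (x + δ)) volume :=
        hf'loc.integrableOn_isCompact isCompact_Icc
      exact (hIO.mono_set Set.Ioc_subset_Icc_self).norm
    · exact Filter.Eventually.of_forall fun t => abs_nonneg _
    · refine HasSubset.Subset.eventuallyLE ?_
      rw [Set.uIoc]
      exact Set.Ioc_subset_Ioc (le_min (by linarith) (by linarith))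
        (max_le (by linarith) (by linarith))
  -- φ properties
  have hφnn : ∀ t : ℝ, 0 ≤ phiSigma σ t := by
    intro t
    have := hmono (show t - 1 ≤ t + 1 by linarith)
    unfold phiSigma; linarith
  have hσle : ∀ t : ℝ, σ t ≤ 1 := fun t =>
    ge_of_tendsto h1 (eventually_atTop.2 ⟨t, fun u hu => hmono hu⟩)
  have hσ0 : σ 0 = 1/2 := by have := hodd 0; rw [neg_zero] at this; linarith
  have hφeven : ∀ t : ℝ, phiSigma σ (-t) = phiSigma σ t := by
    intro t
    unfold phiSigma
    have e1 := hodd (t + 1)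
    have e2 := hodd (t - 1)
    rw [show -t + 1 = -(t - 1) by ring, show -t - 1 = -(t + 1) by ring]
    linarith
  have hφpos : ∀ t : ℝ, 0 ≤ t → t < 2 → 0 < phiSigma σ t := by
    intro t ht0 ht2
    unfold phiSigma
    rcases lt_or_ge t 1 with h | h
    · have h1pos : σ 0 < σ 1 := sigma_strict_aux hmono h1 hconc le_rfl one_pos hσ1
      have ha1 : σ (t - 1) ≤ σ 0 := hmono (by linarith)
      have ha2 : σ 1 ≤ σ (t + 1) := hmono (by linarith)
      linarith
    · have hlt : σ (t - 1) ≤ σ 1 := hmono (by linarith)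
      rcases lt_or_ge (σ (t + 1)) 1 with hu | hu
      · have := sigma_strict_aux hmono h1 hconc (by linarith : (0:ℝ) ≤ t - 1)
          (by linarith : t - 1 < t + 1) hu
        linarith
      · linarith
  have hφpos' : ∀ t : ℝ, |t| < 2 → 0 < phiSigma σ t := by
    intro t ht
    rw [abs_lt] at ht
    rcases le_or_gt 0 t with h | h
    · exact hφpos t h ht.2
    · rw [show t = -(-t) by ring, hφeven]
      exact hφpos (-t) (by linarith) (by linarith)
  -- denominator positivity
  set T := Finset.Icc ⌈(n : ℝ) * a⌉ (⌊(n : ℝ) * b⌋ - 1) with hT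
  set S := ∑ k ∈ T, phiSigma σ ((n : ℝ) * x - (k : ℝ)) with hSdef
  have hk0mem : min ⌈(n : ℝ) * x⌉ (⌊(n : ℝ) * b⌋ - 1) ∈ T := by
    rw [hT, Finset.mem_Icc]
    refine ⟨le_min (Int.ceil_le_ceil ?_) hn, min_le_right _ _⟩
    exact mul_le_mul_of_nonneg_left hx.1 hn0.le
  have hk0close : |(n : ℝ) * x - (min ⌈(n : ℝ) * x⌉ (⌊(n : ℝ) * b⌋ - 1) : ℤ)| < 2 := by
    rw [abs_lt]
    constructor
    · have h1' : ((min ⌈(n : ℝ) * x⌉ (⌊(n : ℝ) * b⌋ - 1) : ℤ) : ℝ) ≤ (⌈(n : ℝ) * x⌉ : ℝ) := by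
        exact_mod_cast min_le_left _ _
      have := Int.ceil_lt_add_one ((n : ℝ) * x)
      linarith
    · rcases min_cases ⌈(n : ℝ) * x⌉ (⌊(n : ℝ) * b⌋ - 1) with ⟨he, _⟩ | ⟨he, hlt⟩
      · rw [he]
        have := Int.le_ceil ((n : ℝ) * x)
        linarith
      · rw [he]
        have hxb : (n : ℝ) * x ≤ (n : ℝ) * b := mul_le_mul_of_nonneg_left hx.2 hn0.le
        have := Int.lt_floor_add_one ((n : ℝ) * b)
        push_cast
        linarith
  have hS : 0 < S := by
    rw [hSdef]
    exact lt_of_lt_of_le (hφpos' _ hk0close)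
      (Finset.single_le_sum (f := fun k : ℤ => phiSigma σ ((n : ℝ) * x - (k : ℝ)))
        (fun k _ => hφnn _) hk0mem)
  -- per-term estimate
  have hterm : ∀ k ∈ T,
      |((n : ℝ) * ∫ u in ((k : ℝ) / n)..(((k : ℝ) + 1) / n), f u) - f x| *
          phiSigma σ ((n : ℝ) * x - (k : ℝ)) ≤ I * phiSigma σ ((n : ℝ) * x - (k : ℝ)) := by
    intro k _
    rcases eq_or_ne (phiSigma σ ((n : ℝ) * x - (k : ℝ))) 0 with h | h
    · rw [h]; simp
    · have hkx : |(n : ℝ) * x - (k : ℝ)| ≤ Υ := by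
        by_contra hc
        exact h (hsupp _ (lt_of_not_ge hc))
      rw [abs_le] at hkx
      apply mul_le_mul_of_nonneg_right _ (hφnn _)
      have hlt : ((k : ℝ)) / n < ((k : ℝ) + 1) / n := (div_lt_div_iff_of_pos_right hn0).mpr (by linarith)
      have hintf : IntervalIntegrable f volume ((k : ℝ) / n) (((k : ℝ) + 1) / n) :=
        hfc.intervalIntegrable _ _
      have hlen : ((k : ℝ) + 1) / n - (k : ℝ) / n = 1 / n := by field_simp; ring
      have hsub : (∫ u in ((k : ℝ) / n)..(((k : ℝ) + 1) / n), (f u - f x))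
          = (∫ u in ((k : ℝ) / n)..(((k : ℝ) + 1) / n), f u) - (1 / n) * f x := by
        rw [intervalIntegral.integral_sub hintf intervalIntegrable_const,
          intervalIntegral.integral_const, smul_eq_mul, hlen]
      have hbd : |∫ u in ((k : ℝ) / n)..(((k : ℝ) + 1) / n), (f u - f x)| ≤ I * (1 / n) := by
        have hptw : ∀ u ∈ Set.uIoc ((k : ℝ) / n) (((k : ℝ) + 1) / n),
            ‖f u - f x‖ ≤ I := by
          intro u hu
          rw [Set.uIoc_of_le hlt.le] at hu
          have hul : (k : ℝ) < u * n := (div_lt_iff₀ hn0).mp hu.1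
          have huu : u * n ≤ (k : ℝ) + 1 := (le_div_iff₀ hn0).mp hu.2
          have hd1 : u - x ≤ δ := by
            rw [hδdef, le_div_iff₀ hn0]; nlinarith [hkx.1]
          have hd2 : x - u ≤ δ := by
            rw [hδdef, le_div_iff₀ hn0]; nlinarith [hkx.2]
          rw [Real.norm_eq_abs]
          exact key u (abs_le.mpr ⟨by linarith, hd1⟩)
        have := intervalIntegral.norm_integral_le_of_norm_le_const hptw
        rw [Real.norm_eq_abs] at this
        calc |∫ u in ((k : ℝ) / n)..(((k : ℝ) + 1) / n), (f u - f x)|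
            ≤ I * |((k : ℝ) + 1) / n - (k : ℝ) / n| := this
          _ = I * (1 / n) := by rw [hlen, abs_of_pos (by positivity)]
      have hrw : ((n : ℝ) * ∫ u in ((k : ℝ) / n)..(((k : ℝ) + 1) / n), f u) - f x
          = (n : ℝ) * ∫ u in ((k : ℝ) / n)..(((k : ℝ) + 1) / n), (f u - f x) := by
        rw [hsub]; field_simp
      calc |((n : ℝ) * ∫ u in ((k : ℝ) / n)..(((k : ℝ) + 1) / n), f u) - f x|
          = (n : ℝ) * |∫ u in ((k : ℝ) / n)..(((k : ℝ) + 1) / n), (f u - f x)| := by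
            rw [hrw, abs_mul, abs_of_pos hn0]
        _ ≤ (n : ℝ) * (I * (1 / n)) := mul_le_mul_of_nonneg_left hbd hn0.le
        _ = I := by field_simp
  -- combine
  have hdiff : Kop σ a b n f x - f x
      = (∑ k ∈ T, (((n : ℝ) * ∫ u in ((k : ℝ) / n)..(((k : ℝ) + 1) / n), f u) - f x) *
          phiSigma σ ((n : ℝ) * x - (k : ℝ))) / S := by
    unfold Kop
    rw [eq_div_iff hS.ne', sub_mul, div_mul_cancel₀ _ hS.ne']
    simp only [← hT, hSdef, Finset.mul_sum, sub_mul, Finset.sum_sub_distrib]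
  rw [hdiff, abs_div, abs_of_pos hS, div_le_iff₀ hS]
  calc |∑ k ∈ T, (((n : ℝ) * ∫ u in ((k : ℝ) / n)..(((k : ℝ) + 1) / n), f u) - f x) *
          phiSigma σ ((n : ℝ) * x - (k : ℝ))|
      ≤ ∑ k ∈ T, |(((n : ℝ) * ∫ u in ((k : ℝ) / n)..(((k : ℝ) + 1) / n), f u) - f x) *
          phiSigma σ ((n : ℝ) * x - (k : ℝ))| := Finset.abs_sum_le_sum_abs _ _
    _ = ∑ k ∈ T, |((n : ℝ) * ∫ u in ((k : ℝ) / n)..(((k : ℝ) + 1) / n), f u) - f x| *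
          phiSigma σ ((n : ℝ) * x - (k : ℝ)) := by
        refine Finset.sum_congr rfl fun k _ => ?_
        rw [abs_mul, abs_of_nonneg (hφnn _)]
    _ ≤ ∑ k ∈ T, I * phiSigma σ ((n : ℝ) * x - (k : ℝ)) := Finset.sum_le_sum hterm
    _ = I * S := by rw [← Finset.mul_sum]
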